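/- If k₀ < k_c and H : ℝ^{k₀} → ℝ^{k_c} is Lipschitz, then H is not surjective; consequently (with G_c injective) the cut generator's range strictly contains the uncut generator's range. -/
import Mathlib

theorem lipschitz_low_dim_not_surjective
    (k₀ kc n : ℕ) (hk : k₀ < kc) (L : NNReal)
    (H : EuclideanSpace ℝ (Fin k₀) → EuclideanSpace ℝ (Fin kc))
    (hH : LipschitzWith L H)
    (G₀ : EuclideanSpace ℝ (Fin k₀) → EuclideanSpace ℝ (Fin n))
    (Gc : EuclideanSpace ℝ (Fin kc) → EuclideanSpace ℝ (Fin n))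
    (hcomp : G₀ = Gc ∘ H)
    (hGc : Function.Injective Gc) :
    ¬ Function.Surjective H ∧ Set.range G₀ ⊂ Set.range Gc := by
  have hns : ¬ Function.Surjective H := by
    intro hs
    have h1 : dimH (Set.range H) ≤ dimH (Set.univ : Set (EuclideanSpace ℝ (Fin k₀))) :=
      hH.dimH_range_le
    rw [Set.range_eq_univ.mpr hs] at h1
    rw [Real.dimH_univ_eq_finrank, Real.dimH_univ_eq_finrank] at h1
    simp [finrank_euclideanSpace] at h1
    exact absurd h1 (not_le.mpr (by exact_mod_cast hk))
  refine ⟨hns, ?_⟩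
  constructor
  · rintro _ ⟨x, rfl⟩
    exact ⟨H x, by rw [hcomp]; rfl⟩
  · intro hsub
    apply hns
    intro y
    obtain ⟨x, hx⟩ := hsub ⟨y, rfl⟩
    exact ⟨x, hGc (by rw [hcomp] at hx; exact hx)⟩
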